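/- Let K₁ and K₀ be finite measures on ℝ^d, let M = (1/2)·(K₁ + K₀), and let f : ℝ^d → ℝ be measurable with 0 ≤ f(z) ≤ 2, such that K₁ = M.withDensity f and K₀ = M.withDensity (2 − f). Let β₁, β₀, φ₁ ∈ ℝ^d, let Σ : ℝ^d → ℝ^d be a linear map, and let χ : ℝ^d → ℝ^d be a bounded measurable function. Assume the Girsanov relation Σ(φ₁) = β₁ − β₀ − ∫ (f(z) − 1)·χ(z) d(K₁+K₀)(z) (Bochner integral). Then for every p with 0 < p < 1, setting K̄_p = p·K₁ + (1−p)·K₀ and ψ_p(z) = f(z)/(p·f(z) + (1−p)·(2−f(z))), one has β₁ − (p·β₁ + (1−p)·β₀) = Σ((1−p)·φ₁) + ∫ (ψ_p(z) − 1)·χ(z) dK̄_p(z). -/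

import Mathlib

open MeasureTheory
open scoped ENNReal

/-- Let `K₁`, `K₀` be finite measures on `ℝ^d`, `M = (1/2)·(K₁+K₀)`,
`f : ℝ^d → ℝ` measurable with `0 ≤ f ≤ 2`, `K₁ = M.withDensity f`,
`K₀ = M.withDensity (2 − f)`. Let `β₁, β₀, φ₁ ∈ ℝ^d`, `Σ` a linear map `ℝ^d → ℝ^d`, and
`χ : ℝ^d → ℝ^d` bounded measurable. Assume the Girsanov relation
`Σ φ₁ = β₁ − β₀ − ∫ (f z − 1) • χ z d(K₁+K₀)`. Then for every `p ∈ (0,1)`, with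
`K̄_p = p·K₁ + (1−p)·K₀` and `ψ_p z = f z/(p·f z + (1−p)·(2−f z))`,
`β₁ − (p·β₁ + (1−p)·β₀) = Σ ((1−p)·φ₁) + ∫ (ψ_p z − 1) • χ z dK̄_p`. -/
theorem stmt7 {d : ℕ}
    (K₁ K₀ : Measure (Fin d → ℝ)) [IsFiniteMeasure K₁] [IsFiniteMeasure K₀]
    (M : Measure (Fin d → ℝ)) (hM : M = (1/2 : ℝ≥0∞) • (K₁ + K₀))
    (f : (Fin d → ℝ) → ℝ) (hf : Measurable f)
    (hf0 : ∀ z, 0 ≤ f z) (hf2 : ∀ z, f z ≤ 2)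
    (hK₁ : K₁ = M.withDensity (fun z => ENNReal.ofReal (f z)))
    (hK₀ : K₀ = M.withDensity (fun z => ENNReal.ofReal (2 - f z)))
    (β₁ β₀ φ₁ : Fin d → ℝ) (Sig : (Fin d → ℝ) →ₗ[ℝ] (Fin d → ℝ))
    (χ : (Fin d → ℝ) → (Fin d → ℝ)) (hχ : Measurable χ) (hχb : ∃ C, ∀ z, ‖χ z‖ ≤ C)
    (hGirsanov : Sig φ₁ = β₁ - β₀ - ∫ z, (f z - 1) • χ z ∂(K₁ + K₀))
    (p : ℝ) (hp0 : 0 < p) (hp1 : p < 1)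
    (Kbar : Measure (Fin d → ℝ))
    (hKbar : Kbar = ENNReal.ofReal p • K₁ + ENNReal.ofReal (1 - p) • K₀)
    (ψ : (Fin d → ℝ) → ℝ)
    (hψ : ∀ z, ψ z = f z / (p * f z + (1 - p) * (2 - f z))) :
    β₁ - (p • β₁ + (1 - p) • β₀) = Sig ((1 - p) • φ₁) + ∫ z, (ψ z - 1) • χ z ∂Kbar := by
  have hp1' : (0 : ℝ) < 1 - p := by linarith
  set den : (Fin d → ℝ) → ℝ := fun z => p * f z + (1 - p) * (2 - f z) with hden_def
  have hdenpos : ∀ z, 0 < den z := by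
    intro z
    have h0 := hf0 z; have h2 := hf2 z
    simp only [hden_def]
    nlinarith [mul_nonneg hp0.le h0, mul_nonneg hp1'.le (by linarith : (0:ℝ) ≤ 2 - f z),
      mul_pos hp0 hp1']
  have hden_meas : Measurable den := by
    apply Measurable.add
    · exact (measurable_const.mul hf)
    · exact measurable_const.mul (measurable_const.sub hf)
  -- Kbar as a withDensity of M
  have hKbarM : Kbar = M.withDensity (fun z => ENNReal.ofReal (den z)) := by
    have funeq : (fun z => ENNReal.ofReal (den z))
        = (ENNReal.ofReal p • fun z => ENNReal.ofReal (f z))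
          + (ENNReal.ofReal (1 - p) • fun z => ENNReal.ofReal (2 - f z)) := by
      funext z
      simp only [Pi.add_apply, Pi.smul_apply, smul_eq_mul]
      rw [← ENNReal.ofReal_mul hp0.le, ← ENNReal.ofReal_mul hp1'.le,
        ← ENNReal.ofReal_add (mul_nonneg hp0.le (hf0 z))
          (mul_nonneg hp1'.le (by linarith [hf2 z]))]
    rw [hKbar, hK₁, hK₀, funeq,
      withDensity_add_left (hf.ennreal_ofReal.const_smul _),
      withDensity_smul _ hf.ennreal_ofReal,
      withDensity_smul _ (show Measurable fun z => ENNReal.ofReal (2 - f z) from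
        (measurable_const.sub hf).ennreal_ofReal)]
  -- K₁ + K₀ = 2 • M
  have hKsum : K₁ + K₀ = (2 : ℝ≥0∞) • M := by
    rw [hM, smul_smul, one_div, ENNReal.mul_inv_cancel (by norm_num) (by norm_num), one_smul]
  -- scalar identity
  have hscal : ∀ z, den z * (ψ z - 1) = 2 * (1 - p) * (f z - 1) := by
    intro z
    rw [hψ z]
    have hne : den z ≠ 0 := (hdenpos z).ne'
    have hne' : p * f z + (1 - p) * (2 - f z) ≠ 0 := hne
    simp only [hden_def]
    field_simp
    ring
  -- integral over Kbar
  have hInt : (∫ z, (ψ z - 1) • χ z ∂Kbar)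
      = (2 * (1 - p)) • ∫ z, (f z - 1) • χ z ∂M := by
    rw [hKbarM]
    have hcoe : (fun z => ENNReal.ofReal (den z))
        = fun z => ((fun z => (den z).toNNReal) z : ℝ≥0∞) := rfl
    rw [hcoe, integral_withDensity_eq_integral_smul (hden_meas.real_toNNReal) _]
    rw [← integral_smul]
    refine integral_congr_ae (Filter.Eventually.of_forall fun z => ?_)
    have h1 : ((den z).toNNReal : ℝ) = den z := Real.coe_toNNReal _ (hdenpos z).le
    show (den z).toNNReal • (ψ z - 1) • χ z = (2 * (1 - p)) • (f z - 1) • χ z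
    rw [NNReal.smul_def, h1, smul_smul, smul_smul, hscal z]
  have hIntSum : (∫ z, (f z - 1) • χ z ∂(K₁ + K₀)) = (2 : ℝ) • ∫ z, (f z - 1) • χ z ∂M := by
    rw [hKsum, integral_smul_measure]
    norm_num
  have hSig : Sig ((1 - p) • φ₁) = (1 - p) • Sig φ₁ := Sig.map_smul _ _
  rw [hSig, hGirsanov, hInt, hIntSum]
  set I := ∫ z, (f z - 1) • χ z ∂M
  module
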